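/- Let v : Ω → ℝ satisfy: (a) ‖v‖_∞ ≤ C₀; (b) for all x₀ ∈ ∂Ω, r > 0: osc_{B_r(x₀) ∩ Ω} v ≤ C₁ r^τ; (c) whenever x, y ∈ Ω with |x-y| < δ(x)/8 (δ(x) = dist(x,∂Ω)) one has |v(x)-v(y)| ≤ C₂ |x-y| / (δ(x) δ(y)). Then v is κ-Hölder continuous on Ω with κ = min(1 - 2/p, τ/p) for any p > 2, with Hölder constant depending only on C₀, C₁, C₂, τ, p, diam Ω. -/

import Mathlib

open Metric

set_option maxHeartbeats 1000000

theorem stmt18 (C₀ C₁ C₂ τ p D : ℝ) (hτ0 : 0 < τ) (hτ1 : τ < 1) (hp : 2 < p) :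
    ∃ C : ℝ, ∀ (d : ℕ) (Ω : Set (EuclideanSpace ℝ (Fin d)))
      (v : EuclideanSpace ℝ (Fin d) → ℝ),
      IsOpen Ω → Bornology.IsBounded Ω → Metric.diam Ω ≤ D →
      (∀ x ∈ Ω, |v x| ≤ C₀) →
      (∀ x₀ ∈ frontier Ω, ∀ r > (0 : ℝ),
        ∀ x ∈ Metric.ball x₀ r ∩ Ω, ∀ y ∈ Metric.ball x₀ r ∩ Ω,
          |v x - v y| ≤ C₁ * r ^ τ) →
      (∀ x ∈ Ω, ∀ y ∈ Ω, ‖x - y‖ < Metric.infDist x Ωᶜ / 8 →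
        |v x - v y| ≤ C₂ * ‖x - y‖ / (Metric.infDist x Ωᶜ * Metric.infDist y Ωᶜ)) →
      ∀ x ∈ Ω, ∀ y ∈ Ω,
        |v x - v y| ≤ C * ‖x - y‖ ^ min (1 - 2 / p) (τ / p) := by
  have hp0 : (0:ℝ) < p := by linarith
  set κ : ℝ := min (1 - 2 / p) (τ / p) with hκdef
  have hκ0 : 0 < κ := by
    apply lt_min
    · have : 2 / p < 1 := (div_lt_one hp0).2 hp
      linarith
    · positivity
  have hκ1 : κ ≤ 1 - 2/p := min_le_left _ _
  have hκ2 : κ ≤ τ/p := min_le_right _ _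
  set t : ℝ := (1/8 : ℝ) ^ p with htdef
  have ht0 : 0 < t := Real.rpow_pos_of_pos (by norm_num) p
  refine ⟨max (2 * max C₀ 0 / t ^ κ) (max (max C₁ 0 * 3 ^ τ) (8/7 * max C₂ 0)), ?_⟩
  intro d Ω v hΩopen hΩbdd hdiam hC₀ hC₁ hC₂ x hx y hy
  set C : ℝ := max (2 * max C₀ 0 / t ^ κ) (max (max C₁ 0 * 3 ^ τ) (8/7 * max C₂ 0)) with hCdef
  have hC0 : 0 ≤ C := le_trans (by positivity) (le_max_left _ _)
  set r : ℝ := ‖x - y‖ with hrdef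
  have hr0 : 0 ≤ r := norm_nonneg _
  rcases eq_or_lt_of_le hr0 with hr | hr
  · -- r = 0 : x = y
    have hxy : x = y := by
      have h0 : ‖x - y‖ = 0 := by rw [← hrdef, ← hr]
      exact sub_eq_zero.1 (norm_eq_zero.1 h0)
    rw [hxy, sub_self, abs_zero, ← hr, Real.zero_rpow (ne_of_gt hκ0), mul_zero]
  · -- r > 0
    rcases le_or_gt t r with hrt | hrt
    · -- big r case
      have h1 : |v x - v y| ≤ 2 * max C₀ 0 := by
        have := hC₀ x hx; have := hC₀ y hy
        have := abs_sub (v x) (v y)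
        calc |v x - v y| ≤ |v x| + |v y| := abs_sub _ _
          _ ≤ 2 * max C₀ 0 := by
            have h1 := hC₀ x hx; have h2 := hC₀ y hy
            have := le_max_left C₀ (0:ℝ)
            linarith [le_trans h1 (le_max_left C₀ 0), le_trans h2 (le_max_left C₀ 0)]
      have htκ : t ^ κ ≤ r ^ κ := Real.rpow_le_rpow (le_of_lt ht0) hrt (le_of_lt hκ0)
      have htκ0 : 0 < t ^ κ := Real.rpow_pos_of_pos ht0 κ
      calc |v x - v y| ≤ 2 * max C₀ 0 := h1
        _ = (2 * max C₀ 0 / t ^ κ) * t ^ κ := by field_simp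
        _ ≤ (2 * max C₀ 0 / t ^ κ) * r ^ κ := by
            apply mul_le_mul_of_nonneg_left htκ (by positivity)
        _ ≤ C * r ^ κ := by
            apply mul_le_mul_of_nonneg_right (le_max_left _ _) (by positivity)
    · -- small r
      set s : ℝ := r ^ (1/p : ℝ) with hsdef
      have hs0 : 0 < s := Real.rpow_pos_of_pos hr _
      have hs8 : s < 1/8 := by
        have := Real.rpow_lt_rpow (le_of_lt hr) hrt (by positivity : (0:ℝ) < 1/p)
        rwa [htdef, ← Real.rpow_mul (by norm_num), mul_one_div, div_self (ne_of_gt hp0),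
          Real.rpow_one] at this
      have hs1 : s ≤ 1 := le_of_lt (lt_trans hs8 (by norm_num))
      have hsp : s ^ (p:ℝ) = r := by
        rw [hsdef, ← Real.rpow_mul (le_of_lt hr), one_div, inv_mul_cancel₀ (ne_of_gt hp0),
          Real.rpow_one]
      have hrs2 : r ≤ s * s := by
        have h2 : s ^ (p:ℝ) ≤ s ^ (2:ℝ) :=
          Real.rpow_le_rpow_of_exponent_ge hs0 hs1 (le_of_lt hp)
        have : s ^ (2:ℝ) = s * s := by
          rw [show (2:ℝ) = ((2:ℕ):ℝ) by norm_num, Real.rpow_natCast]; ring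
        rw [hsp, this] at h2; exact h2
      have hrs : r < s / 8 := by
        calc r ≤ s * s := hrs2
          _ < s * (1/8) := by exact mul_lt_mul_of_pos_left hs8 hs0
          _ = s / 8 := by ring
      have hr1 : r ≤ 1 := le_trans hrs2 (by nlinarith)
      have hsτ : s ^ τ = r ^ (τ/p) := by
        rw [hsdef, ← Real.rpow_mul (le_of_lt hr), one_div, inv_mul_eq_div]
      -- distances
      set δx : ℝ := infDist x Ωᶜ with hδx
      set δy : ℝ := infDist y Ωᶜ with hδy
      rcases le_or_gt δx s with hδ | hδ
      · -- boundary case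
        have hΩne : Ω ≠ Set.univ := by
          intro h
          rcases Metric.isBounded_iff.1 hΩbdd with ⟨B, hB⟩
          have hxy : x - y ≠ 0 := by
            intro h0; rw [hrdef, h0, norm_zero] at hr; exact lt_irrefl _ hr
          set u : EuclideanSpace ℝ (Fin d) := ((B+1) / ‖x - y‖) • (x - y) with hu
          have h1 : x ∈ Ω := hx
          have h2 : x + u ∈ Ω := by rw [h]; trivial
          have := hB (by rw [h]; trivial : x ∈ Ω) (by rw [h]; trivial : x + u ∈ Ω)
          rw [dist_eq_norm] at this
          have : ‖u‖ ≤ B := by simpa using this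
          have hB0 : 0 ≤ B := le_trans (norm_nonneg u) this
          have hnu : ‖u‖ = B + 1 := by
            rw [hu, norm_smul, norm_div, Real.norm_eq_abs, abs_of_pos (by linarith : (0:ℝ) < B+1)]
            rw [Real.norm_eq_abs, abs_of_pos hr]
            field_simp
            exact hrdef.symm
          rw [hnu] at this; linarith
        obtain ⟨x₀, hx₀f, hx₀d⟩ := exists_mem_frontier_infDist_compl_eq_dist hx hΩne
        have hbnd := hC₁ x₀ hx₀f (3*s) (by positivity) x
          ⟨by rw [mem_ball, ← hx₀d, ← hδx]; linarith, hx⟩ y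
          ⟨by rw [mem_ball]
              have h1 : dist x x₀ = δx := by rw [hδx, hx₀d]
              have h2 : dist y x = r := by
                rw [dist_eq_norm, show ‖y - x‖ = ‖x - y‖ from norm_sub_rev _ _, ← hrdef]
              have h3 : r ≤ s := le_trans hrs2 (by nlinarith : s*s ≤ s)
              calc dist y x₀ ≤ dist y x + dist x x₀ := dist_triangle _ _ _
                _ < 3*s := by rw [h1, h2]; linarith, hy⟩
        calc |v x - v y| ≤ C₁ * (3*s) ^ τ := hbnd
          _ ≤ max C₁ 0 * (3*s) ^ τ := by
              apply mul_le_mul_of_nonneg_right (le_max_left _ _) (by positivity)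
          _ = max C₁ 0 * 3 ^ τ * s ^ τ := by
              rw [Real.mul_rpow (by norm_num) (le_of_lt hs0)]; ring
          _ = max C₁ 0 * 3 ^ τ * r ^ (τ/p) := by rw [hsτ]
          _ ≤ max C₁ 0 * 3 ^ τ * r ^ κ := by
              apply mul_le_mul_of_nonneg_left
                (Real.rpow_le_rpow_of_exponent_ge hr hr1 hκ2) (by positivity)
          _ ≤ C * r ^ κ := by
              apply mul_le_mul_of_nonneg_right _ (by positivity)
              exact le_trans (le_max_left _ _) (le_max_right _ _)
      · -- interior case
        have hrδ : r < δx / 8 := lt_of_lt_of_le hrs (by linarith)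
        have hbnd := hC₂ x hx y hy (by rw [← hrdef, ← hδx]; exact hrδ)
        have hδy : 7/8 * s < δy := by
          have hlip : δx ≤ δy + dist x y := infDist_le_infDist_add_dist
          rw [dist_eq_norm, ← hrdef] at hlip
          have : r < s/8 := hrs
          linarith
        have hprod : 7/8 * (s*s) < δx * δy := by nlinarith
        have hs2 : s * s = r ^ ((2:ℝ)/p) := by
          rw [hsdef, ← Real.rpow_add hr]
          congr 1; ring
        have hkey : max C₂ 0 * r / (δx * δy) ≤ 8/7 * max C₂ 0 * r ^ (1 - 2/p) := by
          have hnum : 0 ≤ max C₂ 0 * r := by positivity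
          have hd0 : 0 < 7/8 * (s*s) := by positivity
          calc max C₂ 0 * r / (δx * δy) ≤ max C₂ 0 * r / (7/8 * (s*s)) := by
                apply div_le_div_of_nonneg_left hnum hd0 (le_of_lt hprod)
            _ = 8/7 * max C₂ 0 * (r / (s*s)) := by ring
            _ = 8/7 * max C₂ 0 * r ^ (1 - 2/p) := by
                rw [hs2, Real.rpow_sub hr, Real.rpow_one]
        calc |v x - v y| ≤ C₂ * r / (δx * δy) := hbnd
          _ ≤ max C₂ 0 * r / (δx * δy) := by
              have hδδ : (0:ℝ) < δx * δy := by nlinarith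
              exact div_le_div_of_nonneg_right
                (mul_le_mul_of_nonneg_right (le_max_left _ _) hr0) hδδ.le
          _ ≤ 8/7 * max C₂ 0 * r ^ (1 - 2/p) := hkey
          _ ≤ 8/7 * max C₂ 0 * r ^ κ := by
              apply mul_le_mul_of_nonneg_left
                (Real.rpow_le_rpow_of_exponent_ge hr hr1 hκ1) (by positivity)
          _ ≤ C * r ^ κ := by
              apply mul_le_mul_of_nonneg_right _ (by positivity)
              exact le_trans (le_max_right _ _) (le_max_right _ _)
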